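/- The Laplace transform of the Directed Random Market operator satisfies L[T_D[p]](s) = (1/(2s)) (L[p](s) + 1) ∫_0^s L[p](s') ds'. -/

import Mathlib

open MeasureTheory Real Set
open scoped ENNReal

/-- S[p](x) = ∫_x^∞ p(u)/u du. -/
noncomputable def S (p : ℝ → ℝ) (x : ℝ) : ℝ := ∫ u in Set.Ioi x, p u / u

/-- T[p] = S[p] * S[p] (convolution on [0,∞)). -/
noncomputable def T (p : ℝ → ℝ) (x : ℝ) : ℝ := ∫ v in (0:ℝ)..x, S p (x - v) * S p v

/-- The Directed Random Market operator. -/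
noncomputable def TD (p : ℝ → ℝ) (x : ℝ) : ℝ :=
  (1 / 2) * (∫ u in (0:ℝ)..x, p (x - u) * S p u) + (1 / 2) * S p x

/-- Laplace transform of a density on [0,∞). -/
noncomputable def L (p : ℝ → ℝ) (s : ℝ) : ℝ := ∫ x in Set.Ioi (0:ℝ), Real.exp (-s * x) * p x

/-! ### Auxiliary material -/

/-- Truncated version of `S`, globally antitone hence measurable. -/
noncomputable def S' (p : ℝ → ℝ) (x : ℝ) : ℝ := S p (max x 0)

section Aux

variable {p : ℝ → ℝ}

lemma S_nonneg (hpnn : ∀ x, 0 ≤ p x) {x : ℝ} (hx : 0 ≤ x) : 0 ≤ S p x :=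
  setIntegral_nonneg measurableSet_Ioi fun u hu => div_nonneg (hpnn u) (hx.trans (le_of_lt hu))

lemma q_nonneg_ae (hpnn : ∀ x, 0 ≤ p x) {a : ℝ} (ha : 0 ≤ a) :
    0 ≤ᵐ[volume.restrict (Set.Ioi a)] fun u => p u / u :=
  (ae_restrict_iff' measurableSet_Ioi).2 <| .of_forall fun u hu =>
    div_nonneg (hpnn u) (ha.trans (le_of_lt hu))

lemma S_anti (hpnn : ∀ x, 0 ≤ p x) (hS : IntegrableOn (fun u => p u / u) (Set.Ioi 0)) : AntitoneOn (S p) (Set.Ici 0) := by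
  intro a ha b hb hab
  exact setIntegral_mono_set (hS.mono_set (Set.Ioi_subset_Ioi ha))
    (q_nonneg_ae hpnn ha) ((Set.Ioi_subset_Ioi hab).eventuallyLE)

lemma S'_anti (hpnn : ∀ x, 0 ≤ p x) (hS : IntegrableOn (fun u => p u / u) (Set.Ioi 0)) : Antitone (S' p) := fun a b hab =>
  S_anti hpnn hS (Set.mem_Ici.2 (le_max_right a 0)) (Set.mem_Ici.2 (le_max_right b 0))
    (max_le_max hab le_rfl)

lemma S'_meas (hpnn : ∀ x, 0 ≤ p x) (hS : IntegrableOn (fun u => p u / u) (Set.Ioi 0)) : Measurable (S' p) := (S'_anti hpnn hS).measurable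

lemma S'_eq {x : ℝ} (hx : 0 < x) : S' p x = S p x := by
  rw [S', max_eq_left hx.le]

lemma S'_nonneg (hpnn : ∀ x, 0 ≤ p x) (x : ℝ) : 0 ≤ S' p x := S_nonneg hpnn (le_max_right x 0)

lemma S'_le (hpnn : ∀ x, 0 ≤ p x) (hS : IntegrableOn (fun u => p u / u) (Set.Ioi 0)) (x : ℝ) : S' p x ≤ S p 0 :=
  S_anti hpnn hS (Set.mem_Ici.2 le_rfl) (Set.mem_Ici.2 (le_max_right x 0)) (le_max_right x 0)

/-- Integrability of the Laplace integrand. -/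
lemma laplace_integrand_integrable (hpm : Measurable p) (hpnn : ∀ x, 0 ≤ p x) (hpint : IntegrableOn p (Set.Ioi 0)) {t : ℝ} (ht : 0 ≤ t) :
    IntegrableOn (fun u => Real.exp (-t * u) * p u) (Set.Ioi 0) := by
  refine hpint.mono' ?_ ?_
  · exact (((measurable_id.const_mul (-t)).exp.mul hpm).aestronglyMeasurable)
  · refine (ae_restrict_iff' measurableSet_Ioi).2 <| .of_forall fun u hu => ?_
    rw [Real.norm_eq_abs, abs_of_nonneg (mul_nonneg (Real.exp_pos _).le (hpnn u))]
    refine mul_le_of_le_one_left (hpnn u) (Real.exp_le_one_iff.2 ?_)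
    have : (0:ℝ) < u := hu
    nlinarith

lemma L_nonneg (hpnn : ∀ x, 0 ≤ p x) (t : ℝ) : 0 ≤ L p t :=
  setIntegral_nonneg measurableSet_Ioi fun u _ => mul_nonneg (Real.exp_pos _).le (hpnn u)

/-- Elementary integral of the exponential. -/
lemma integral_exp_neg_mul (c b : ℝ) (hc : c ≠ 0) :
    ∫ x in (0:ℝ)..b, Real.exp (-c * x) = (1 - Real.exp (-c * b)) / c := by
  simp only [neg_mul]
  have h : ∀ x ∈ Set.uIcc (0:ℝ) b,
      HasDerivAt (fun y => -Real.exp (-(c * y)) / c) (Real.exp (-(c * x))) x := by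
    intro x _
    have h1 : HasDerivAt (fun y : ℝ => -(c * y)) (-c) x := by
      simpa using ((hasDerivAt_id x).const_mul c).fun_neg
    have h2 := (Real.hasDerivAt_exp (-(c * x))).comp x h1
    have h3 : HasDerivAt (fun i => -((Real.exp ∘ fun y => -(c * y)) i / c))
        (-(Real.exp (-(c * x)) * -c / c)) x := (h2.div_const c).fun_neg
    convert h3 using 1
    · ext y; simp [Function.comp, neg_div]
    · rw [mul_neg, neg_div, neg_neg, mul_div_cancel_right₀ _ hc]
  have hint : IntervalIntegrable (fun x => Real.exp (-(c * x))) volume 0 b :=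
    (Real.continuous_exp.comp (continuous_const.mul continuous_id).neg).intervalIntegrable 0 b
  rw [intervalIntegral.integral_eq_sub_of_hasDerivAt h hint]
  rw [mul_zero, neg_zero, Real.exp_zero]
  field_simp
  ring

end Aux

/-- The Laplace transform of the Directed Random Market operator. -/
theorem laplace_TD (p : ℝ → ℝ) (hpm : Measurable p) (hpnn : ∀ x, 0 ≤ p x)
    (hpint : IntegrableOn p (Set.Ioi 0)) (hp1 : ∫ x in Set.Ioi (0:ℝ), p x = 1)
    (hS : IntegrableOn (fun u => p u / u) (Set.Ioi 0)) :
    ∀ s : ℝ, 0 < s →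
      L (TD p) s = (1 / (2 * s)) * (L p s + 1) * ∫ t in (0:ℝ)..s, L p t := by
  intro s hs
  have hSm : Measurable (S' p) := S'_meas hpnn hS
  have hexpm : Measurable fun x : ℝ => Real.exp (-s * x) := (measurable_id.const_mul (-s)).exp
  have hq_meas : Measurable fun u : ℝ => p u / u := hpm.div measurable_id
  -- the central quantity
  set G : ℝ → ℝ := fun u => p u / u * (1 - Real.exp (-s * u)) with hG
  set E : ℝ≥0∞ := ∫⁻ u in Set.Ioi (0:ℝ), ENNReal.ofReal (G u) with hE
  have hone : ∀ u : ℝ, 0 < u → Real.exp (-s * u) ≤ 1 := fun u hu =>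
    Real.exp_le_one_iff.2 (by nlinarith)
  have hE_ne : E ≠ ⊤ := by
    have hle : E ≤ ∫⁻ u in Set.Ioi (0:ℝ), ENNReal.ofReal (p u / u) := by
      refine lintegral_mono_ae ((ae_restrict_iff' measurableSet_Ioi).2 (.of_forall fun u hu => ?_))
      refine ENNReal.ofReal_le_ofReal ?_
      have hu0 : (0:ℝ) < u := hu
      have h2 : 0 ≤ p u / u := div_nonneg (hpnn u) hu0.le
      have h1 := hone u hu0
      simp only [hG]
      nlinarith [Real.exp_pos (-s * u)]
    refine ne_top_of_le_ne_top ?_ hle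
    rw [← ofReal_integral_eq_lintegral_ofReal hS (q_nonneg_ae hpnn le_rfl)]
    exact ENNReal.ofReal_ne_top
  -- elementary exponential integrals
  have hexp_set : ∀ c b : ℝ, 0 < c → 0 ≤ b →
      (∫ x in Set.Ioc (0:ℝ) b, Real.exp (-c * x)) = (1 - Real.exp (-c * b)) / c := by
    intro c b hc hb
    rw [← intervalIntegral.integral_of_le hb, integral_exp_neg_mul c b hc.ne']
  have hexp_lint : ∀ c b : ℝ, 0 < c → 0 ≤ b →
      (∫⁻ x in Set.Ioc (0:ℝ) b, ENNReal.ofReal (Real.exp (-c * x)))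
        = ENNReal.ofReal ((1 - Real.exp (-c * b)) / c) := by
    intro c b hc hb
    rw [← hexp_set c b hc hb, ← ofReal_integral_eq_lintegral_ofReal]
    · exact (exp_neg_integrableOn_Ioi 0 hc).mono_set Set.Ioc_subset_Ioi_self
    · exact .of_forall fun x => (Real.exp_pos _).le
  -- Claim A
  have LA : (∫⁻ t in Set.Ioc (0:ℝ) s, ENNReal.ofReal (L p t)) = E := by
    have h1 : (∫⁻ t in Set.Ioc (0:ℝ) s, ENNReal.ofReal (L p t))
        = ∫⁻ t in Set.Ioc (0:ℝ) s, ∫⁻ u in Set.Ioi (0:ℝ),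
            ENNReal.ofReal (Real.exp (-t * u) * p u) := by
      refine lintegral_congr_ae ((ae_restrict_iff' measurableSet_Ioc).2 (.of_forall fun t ht => ?_))
      dsimp only
      rw [show L p t = ∫ x in Set.Ioi (0:ℝ), Real.exp (-t * x) * p x from rfl,
        ofReal_integral_eq_lintegral_ofReal (laplace_integrand_integrable hpm hpnn hpint ht.1.le)
        (.of_forall fun u => mul_nonneg (Real.exp_pos _).le (hpnn u))]
    rw [h1, lintegral_lintegral_swap
      ((((measurable_fst.neg.mul measurable_snd).exp.mul
        (hpm.comp measurable_snd)).ennreal_ofReal).aemeasurable)]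
    rw [hE]
    refine lintegral_congr_ae ((ae_restrict_iff' measurableSet_Ioi).2 (.of_forall fun u hu => ?_))
    dsimp only
    have hu0 : (0:ℝ) < u := hu
    have hflip : ∀ t : ℝ, -t * u = -u * t := fun t => by ring
    calc (∫⁻ t in Set.Ioc (0:ℝ) s, ENNReal.ofReal (Real.exp (-t * u) * p u))
        = ∫⁻ t in Set.Ioc (0:ℝ) s, ENNReal.ofReal (Real.exp (-u * t)) * ENNReal.ofReal (p u) := by
          refine lintegral_congr fun t => ?_
          rw [hflip t, ENNReal.ofReal_mul (Real.exp_pos _).le]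
      _ = (∫⁻ t in Set.Ioc (0:ℝ) s, ENNReal.ofReal (Real.exp (-u * t))) * ENNReal.ofReal (p u) :=
          lintegral_mul_const' _ _ ENNReal.ofReal_ne_top
      _ = ENNReal.ofReal ((1 - Real.exp (-u * s)) / u) * ENNReal.ofReal (p u) := by
          rw [hexp_lint u s hu0 hs.le]
      _ = ENNReal.ofReal (G u) := by
          rw [← ENNReal.ofReal_mul (div_nonneg (sub_nonneg.2 (by rw [show -u * s = -s * u by ring]; exact hone u hu0)) hu0.le)]
          congr 1
          simp only [hG]
          rw [show -u * s = -s * u by ring]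
          ring
  -- Claim B
  have LB : (∫⁻ x in Set.Ioi (0:ℝ), ENNReal.ofReal (Real.exp (-s * x) * S p x))
      = ENNReal.ofReal s⁻¹ * E := by
    have h1 : (∫⁻ x in Set.Ioi (0:ℝ), ENNReal.ofReal (Real.exp (-s * x) * S p x))
        = ∫⁻ x in Set.Ioi (0:ℝ), ∫⁻ u in Set.Ioi (0:ℝ),
            (Set.Ioi x).indicator
              (fun u => ENNReal.ofReal (Real.exp (-s * x)) * ENNReal.ofReal (p u / u)) u := by
      refine lintegral_congr_ae ((ae_restrict_iff' measurableSet_Ioi).2 (.of_forall fun x hx => ?_))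
      dsimp only
      have hx0 : (0:ℝ) < x := hx
      rw [lintegral_indicator measurableSet_Ioi, Measure.restrict_restrict measurableSet_Ioi,
        Set.inter_eq_left.2 (Set.Ioi_subset_Ioi hx0.le),
        lintegral_const_mul' _ _ ENNReal.ofReal_ne_top,
        ← ofReal_integral_eq_lintegral_ofReal (hS.mono_set (Set.Ioi_subset_Ioi hx0.le))
          (q_nonneg_ae hpnn hx0.le),
        ← ENNReal.ofReal_mul (Real.exp_pos _).le]
      rfl
    have hunc : Measurable (Function.uncurry fun x u => (Set.Ioi x).indicator
        (fun u => ENNReal.ofReal (Real.exp (-s * x)) * ENNReal.ofReal (p u / u)) u) := by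
      have heq : (Function.uncurry fun x u => (Set.Ioi x).indicator
          (fun u => ENNReal.ofReal (Real.exp (-s * x)) * ENNReal.ofReal (p u / u)) u)
          = fun z : ℝ × ℝ => {w : ℝ × ℝ | w.1 < w.2}.indicator
              (fun w => ENNReal.ofReal (Real.exp (-s * w.1)) * ENNReal.ofReal (p w.2 / w.2)) z := by
        funext z
        by_cases h : z.1 < z.2 <;>
          simp [Function.uncurry, Set.indicator_apply, Set.mem_Ioi, h]
      rw [heq]
      exact Measurable.indicator
        (((measurable_fst.const_mul (-s)).exp.ennreal_ofReal).mul
          ((hq_meas.comp measurable_snd).ennreal_ofReal))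
        (measurableSet_lt measurable_fst measurable_snd)
    rw [h1, lintegral_lintegral_swap hunc.aemeasurable, hE,
      ← lintegral_const_mul' _ _ ENNReal.ofReal_ne_top]
    refine lintegral_congr_ae ((ae_restrict_iff' measurableSet_Ioi).2 (.of_forall fun u hu => ?_))
    dsimp only
    have hu0 : (0:ℝ) < u := hu
    have hpt : ∀ x : ℝ, (Set.Ioi x).indicator
        (fun u' => ENNReal.ofReal (Real.exp (-s * x)) * ENNReal.ofReal (p u' / u')) u
        = (Set.Iio u).indicator (fun x => ENNReal.ofReal (Real.exp (-s * x))) x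
            * ENNReal.ofReal (p u / u) := by
      intro x
      by_cases h : x < u <;> simp [Set.indicator_apply, Set.mem_Ioi, Set.mem_Iio, h]
    simp_rw [hpt]
    rw [lintegral_mul_const' _ _ ENNReal.ofReal_ne_top, lintegral_indicator measurableSet_Iio,
      Measure.restrict_restrict measurableSet_Iio,
      show Set.Iio u ∩ Set.Ioi 0 = Set.Ioo (0:ℝ) u by rw [Set.inter_comm]; exact Set.Ioi_inter_Iio,
      Measure.restrict_congr_set Ioo_ae_eq_Ioc, hexp_lint s u hs hu0.le,
      ← ENNReal.ofReal_mul (div_nonneg (sub_nonneg.2 (hone u hu0)) hs.le),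
      ← ENNReal.ofReal_mul (inv_nonneg.2 hs.le)]
    congr 1
    simp only [hG]
    ring
  -- the Laplace transform of p at s, as a lintegral
  have hLs : (∫⁻ w in Set.Ioi (0:ℝ), ENNReal.ofReal (Real.exp (-s * w) * p w))
      = ENNReal.ofReal (L p s) :=
    (ofReal_integral_eq_lintegral_ofReal (laplace_integrand_integrable hpm hpnn hpint hs.le)
      (.of_forall fun u => mul_nonneg (Real.exp_pos _).le (hpnn u))).symm
  -- inner integrability for the convolution term
  have hconv_int : ∀ x : ℝ, 0 < x →
      IntegrableOn (fun u => p (x - u) * S' p u) (Set.Ioc 0 x) := by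
    intro x hx
    have h1 : IntervalIntegrable p volume 0 x :=
      (intervalIntegrable_iff_integrableOn_Ioc_of_le hx.le).2
        (hpint.mono_set Set.Ioc_subset_Ioi_self)
    have h2 : IntervalIntegrable (fun u => p (x - u)) volume 0 x := by
      simpa using (h1.comp_sub_left x).symm
    have h2' : IntegrableOn (fun u => p (x - u)) (Set.Ioc 0 x) :=
      (intervalIntegrable_iff_integrableOn_Ioc_of_le hx.le).1 h2
    have h3 : Integrable (fun u => S' p u * p (x - u))
        (volume.restrict (Set.Ioc 0 x)) := by
      refine Integrable.bdd_mul (c := S p 0) h2' hSm.aestronglyMeasurable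
        (.of_forall fun u => ?_)
      rw [Real.norm_eq_abs, abs_of_nonneg (S'_nonneg hpnn u)]
      exact S'_le hpnn hS u
    exact h3.congr (.of_forall fun u => mul_comm _ _)
  -- Claim C (convolution)
  have LC : (∫⁻ x in Set.Ioi (0:ℝ),
        ENNReal.ofReal (Real.exp (-s * x) * ∫ u in (0:ℝ)..x, p (x - u) * S p u))
      = ENNReal.ofReal (L p s) * (ENNReal.ofReal s⁻¹ * E) := by
    have h1 : (∫⁻ x in Set.Ioi (0:ℝ),
          ENNReal.ofReal (Real.exp (-s * x) * ∫ u in (0:ℝ)..x, p (x - u) * S p u))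
        = ∫⁻ x in Set.Ioi (0:ℝ), ∫⁻ u in Set.Ioi (0:ℝ),
            (Set.Ioc 0 x).indicator
              (fun u => ENNReal.ofReal (Real.exp (-s * x))
                * ENNReal.ofReal (p (x - u) * S' p u)) u := by
      refine lintegral_congr_ae ((ae_restrict_iff' measurableSet_Ioi).2 (.of_forall fun x hx => ?_))
      dsimp only
      have hx0 : (0:ℝ) < x := hx
      have hcc : (∫ u in (0:ℝ)..x, p (x - u) * S p u)
          = ∫ u in Set.Ioc (0:ℝ) x, p (x - u) * S' p u := by
        rw [intervalIntegral.integral_of_le hx0.le]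
        exact setIntegral_congr_fun measurableSet_Ioc fun u hu => by rw [S'_eq hu.1]
      rw [hcc, lintegral_indicator measurableSet_Ioc, Measure.restrict_restrict measurableSet_Ioc,
        Set.inter_eq_left.2 Set.Ioc_subset_Ioi_self,
        lintegral_const_mul' _ _ ENNReal.ofReal_ne_top,
        ← ofReal_integral_eq_lintegral_ofReal (hconv_int x hx0)
          ((ae_restrict_iff' measurableSet_Ioc).2 (.of_forall fun u hu =>
            mul_nonneg (hpnn _) (S'_nonneg hpnn u))),
        ← ENNReal.ofReal_mul (Real.exp_pos _).le]
    have hunc : Measurable (Function.uncurry fun x u => (Set.Ioc 0 x).indicator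
        (fun u => ENNReal.ofReal (Real.exp (-s * x))
          * ENNReal.ofReal (p (x - u) * S' p u)) u) := by
      have heq : (Function.uncurry fun x u => (Set.Ioc 0 x).indicator
          (fun u => ENNReal.ofReal (Real.exp (-s * x))
            * ENNReal.ofReal (p (x - u) * S' p u)) u)
          = fun z : ℝ × ℝ => {w : ℝ × ℝ | 0 < w.2 ∧ w.2 ≤ w.1}.indicator
              (fun w => ENNReal.ofReal (Real.exp (-s * w.1))
                * ENNReal.ofReal (p (w.1 - w.2) * S' p w.2)) z := by
        funext z
        by_cases h : 0 < z.2 ∧ z.2 ≤ z.1 <;>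
          simp [Function.uncurry, Set.indicator_apply, Set.mem_Ioc, h]
      rw [heq]
      refine Measurable.indicator ?_ ?_
      · exact ((measurable_fst.const_mul (-s)).exp.ennreal_ofReal).mul
          (((hpm.comp (measurable_fst.sub measurable_snd)).mul
            (hSm.comp measurable_snd)).ennreal_ofReal)
      · exact (measurableSet_lt measurable_const measurable_snd).inter
          (measurableSet_le measurable_snd measurable_fst)
    rw [h1, lintegral_lintegral_swap hunc.aemeasurable, ← LB,
      ← lintegral_const_mul' (ENNReal.ofReal (L p s)) _ ENNReal.ofReal_ne_top]
    refine lintegral_congr_ae ((ae_restrict_iff' measurableSet_Ioi).2 (.of_forall fun u hu => ?_))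
    dsimp only
    have hu0 : (0:ℝ) < u := hu
    have hpt : ∀ x : ℝ, (Set.Ioc 0 x).indicator
        (fun u' => ENNReal.ofReal (Real.exp (-s * x)) * ENNReal.ofReal (p (x - u') * S' p u')) u
        = (Set.Ici u).indicator
            (fun x => ENNReal.ofReal (Real.exp (-s * x))
              * ENNReal.ofReal (p (x - u) * S' p u)) x := by
      intro x
      by_cases h : u ≤ x <;>
        simp [Set.indicator_apply, Set.mem_Ioc, Set.mem_Ici, h, hu0]
    simp_rw [hpt]
    have hIci : Set.Ici u ∩ Set.Ioi 0 = Set.Ici u :=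
      Set.inter_eq_left.2 fun y hy => lt_of_lt_of_le hu0 hy
    rw [lintegral_indicator measurableSet_Ici, Measure.restrict_restrict measurableSet_Ici,
      hIci,
      Measure.restrict_congr_set (Ioi_ae_eq_Ici (a := u)).symm,
      ← lintegral_indicator measurableSet_Ioi,
      ← lintegral_add_right_eq_self (fun x => (Set.Ioi u).indicator
          (fun x => ENNReal.ofReal (Real.exp (-s * x))
            * ENNReal.ofReal (p (x - u) * S' p u)) x) u]
    have hpt2 : ∀ w : ℝ, (Set.Ioi u).indicator
        (fun x => ENNReal.ofReal (Real.exp (-s * x))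
          * ENNReal.ofReal (p (x - u) * S' p u)) (w + u)
        = (Set.Ioi (0:ℝ)).indicator
            (fun w => ENNReal.ofReal (Real.exp (-s * u) * S' p u)
              * ENNReal.ofReal (Real.exp (-s * w) * p w)) w := by
      intro w
      by_cases h : 0 < w
      · have h1 : u < w + u := by linarith
        simp only [Set.indicator_apply, Set.mem_Ioi, h, h1, if_true, add_sub_cancel_right]
        rw [← ENNReal.ofReal_mul (Real.exp_pos _).le,
          ← ENNReal.ofReal_mul (mul_nonneg (Real.exp_pos _).le (S'_nonneg hpnn u))]
        congr 1
        rw [show -s * (w + u) = -s * w + -s * u by ring, Real.exp_add]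
        ring
      · have h1 : ¬ u < w + u := by simp only [not_lt]; linarith
        simp [Set.indicator_apply, Set.mem_Ioi, h, h1]
    simp_rw [hpt2]
    rw [lintegral_indicator measurableSet_Ioi, lintegral_const_mul' _ _ ENNReal.ofReal_ne_top,
      hLs, S'_eq hu0]
    exact mul_comm _ _
  -- integrability and values of the two pieces
  have hBnn : 0 ≤ᵐ[volume.restrict (Set.Ioi (0:ℝ))] fun x => Real.exp (-s * x) * S p x :=
    (ae_restrict_iff' measurableSet_Ioi).2 (.of_forall fun x hx =>
      mul_nonneg (Real.exp_pos _).le (S_nonneg hpnn (le_of_lt hx)))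
  have hBmeas : AEStronglyMeasurable (fun x => Real.exp (-s * x) * S p x)
      (volume.restrict (Set.Ioi (0:ℝ))) :=
    ((hexpm.mul hSm).aestronglyMeasurable).congr
      ((ae_restrict_iff' measurableSet_Ioi).2 (.of_forall fun x hx => by
        simp only [Pi.mul_apply, S'_eq hx]))
  have hB_int : IntegrableOn (fun x => Real.exp (-s * x) * S p x) (Set.Ioi 0) :=
    ⟨hBmeas, (hasFiniteIntegral_iff_ofReal hBnn).2 (by
      rw [LB]
      exact ENNReal.mul_lt_top ENNReal.ofReal_lt_top hE_ne.lt_top)⟩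
  have hB_val : (∫ x in Set.Ioi (0:ℝ), Real.exp (-s * x) * S p x) = s⁻¹ * E.toReal := by
    rw [integral_eq_lintegral_of_nonneg_ae hBnn hBmeas, LB, ENNReal.toReal_mul,
      ENNReal.toReal_ofReal (inv_nonneg.2 hs.le)]
  have hconv_nn : ∀ x : ℝ, 0 < x → 0 ≤ ∫ u in (0:ℝ)..x, p (x - u) * S p u := by
    intro x hx
    rw [intervalIntegral.integral_of_le hx.le]
    exact setIntegral_nonneg measurableSet_Ioc fun u hu =>
      mul_nonneg (hpnn _) (S_nonneg hpnn hu.1.le)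
  have hCnn : 0 ≤ᵐ[volume.restrict (Set.Ioi (0:ℝ))]
      fun x => Real.exp (-s * x) * ∫ u in (0:ℝ)..x, p (x - u) * S p u :=
    (ae_restrict_iff' measurableSet_Ioi).2 (.of_forall fun x hx =>
      mul_nonneg (Real.exp_pos _).le (hconv_nn x hx))
  have hCmeas : AEStronglyMeasurable
      (fun x => Real.exp (-s * x) * ∫ u in (0:ℝ)..x, p (x - u) * S p u)
      (volume.restrict (Set.Ioi (0:ℝ))) := by
    have hsetm : MeasurableSet {w : ℝ × ℝ | 0 < w.2 ∧ w.2 ≤ w.1} :=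
      (measurableSet_lt measurable_const measurable_snd).inter
        (measurableSet_le measurable_snd measurable_fst)
    have hFm : StronglyMeasurable fun z : ℝ × ℝ =>
        ({w : ℝ × ℝ | 0 < w.2 ∧ w.2 ≤ w.1}.indicator
          (fun w => p (w.1 - w.2) * S' p w.2)) z :=
      (Measurable.indicator ((hpm.comp (measurable_fst.sub measurable_snd)).mul
        (hSm.comp measurable_snd)) hsetm).stronglyMeasurable
    have hKm : StronglyMeasurable fun x : ℝ => ∫ u,
        ({w : ℝ × ℝ | 0 < w.2 ∧ w.2 ≤ w.1}.indicator
          (fun w => p (w.1 - w.2) * S' p w.2)) (x, u) := hFm.integral_prod_right'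
    refine ((hexpm.stronglyMeasurable.mul hKm).aestronglyMeasurable).congr ?_
    refine (ae_restrict_iff' measurableSet_Ioi).2 (.of_forall fun x hx => ?_)
    simp only [Pi.mul_apply]
    congr 1
    rw [intervalIntegral.integral_of_le (le_of_lt hx), ← integral_indicator measurableSet_Ioc]
    refine integral_congr_ae (.of_forall fun u => ?_)
    by_cases h : 0 < u ∧ u ≤ x
    · simp [Set.indicator_apply, Set.mem_Ioc, h, S'_eq h.1]
    · simp [Set.indicator_apply, Set.mem_Ioc, h]
  have hC_int : IntegrableOn
      (fun x => Real.exp (-s * x) * ∫ u in (0:ℝ)..x, p (x - u) * S p u) (Set.Ioi 0) :=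
    ⟨hCmeas, (hasFiniteIntegral_iff_ofReal hCnn).2 (by
      rw [LC]
      exact ENNReal.mul_lt_top ENNReal.ofReal_lt_top
        (ENNReal.mul_lt_top ENNReal.ofReal_lt_top hE_ne.lt_top))⟩
  have hC_val : (∫ x in Set.Ioi (0:ℝ), Real.exp (-s * x) * ∫ u in (0:ℝ)..x, p (x - u) * S p u)
      = L p s * (s⁻¹ * E.toReal) := by
    rw [integral_eq_lintegral_of_nonneg_ae hCnn hCmeas, LC, ENNReal.toReal_mul,
      ENNReal.toReal_mul, ENNReal.toReal_ofReal (L_nonneg hpnn s),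
      ENNReal.toReal_ofReal (inv_nonneg.2 hs.le)]
  -- value of the primitive of the Laplace transform
  have hAnn : 0 ≤ᵐ[volume.restrict (Set.Ioc (0:ℝ) s)] L p := .of_forall (L_nonneg hpnn)
  have hL'_anti : Antitone fun t : ℝ => L p (max t 0) := by
    intro t1 t2 h
    show (∫ u in Set.Ioi (0:ℝ), Real.exp (-(max t2 0) * u) * p u)
      ≤ ∫ u in Set.Ioi (0:ℝ), Real.exp (-(max t1 0) * u) * p u
    refine setIntegral_mono_on
      (laplace_integrand_integrable hpm hpnn hpint (le_max_right _ _))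
      (laplace_integrand_integrable hpm hpnn hpint (le_max_right _ _))
      measurableSet_Ioi fun u hu => ?_
    have hu0 : (0:ℝ) < u := hu
    have hmx : max t1 0 ≤ max t2 0 := max_le_max h le_rfl
    exact mul_le_mul_of_nonneg_right (Real.exp_le_exp.2 (by nlinarith)) (hpnn u)
  have hAmeas : AEStronglyMeasurable (L p) (volume.restrict (Set.Ioc (0:ℝ) s)) :=
    (hL'_anti.measurable.aestronglyMeasurable).congr
      ((ae_restrict_iff' measurableSet_Ioc).2 (.of_forall fun t ht => by
        dsimp only
        rw [max_eq_left ht.1.le]))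
  have hA_val : (∫ t in Set.Ioc (0:ℝ) s, L p t) = E.toReal := by
    rw [integral_eq_lintegral_of_nonneg_ae hAnn hAmeas, LA]
  -- split the integral
  have hTD : ∀ x : ℝ, Real.exp (-s * x) * TD p x
      = (1/2) * (Real.exp (-s * x) * ∫ u in (0:ℝ)..x, p (x - u) * S p u)
        + (1/2) * (Real.exp (-s * x) * S p x) := by
    intro x
    rw [show TD p x = (1/2) * (∫ u in (0:ℝ)..x, p (x - u) * S p u) + (1/2) * S p x from rfl]
    ring
  have hsplit : L (TD p) s
      = (1/2) * (∫ x in Set.Ioi (0:ℝ), Real.exp (-s * x) * ∫ u in (0:ℝ)..x, p (x - u) * S p u)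
        + (1/2) * (∫ x in Set.Ioi (0:ℝ), Real.exp (-s * x) * S p x) := by
    rw [show L (TD p) s = ∫ x in Set.Ioi (0:ℝ), Real.exp (-s * x) * TD p x from rfl]
    simp_rw [hTD]
    rw [integral_add (hC_int.const_mul _) (hB_int.const_mul _), integral_const_mul,
      integral_const_mul]
  rw [hsplit, hB_val, hC_val, intervalIntegral.integral_of_le hs.le, hA_val]
  have hs' : s ≠ 0 := ne_of_gt hs
  field_simp
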